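/- Let r ∈ ℕ, m ≥ r−1, and let a : ℤ → ℂ^{r×r} be a finitely supported interpolatory Hermite mask, i.e., a(0) = diag(2^{-1},…,2^{-r}) and a(2k) = 0 for k ≠ 0. Suppose a has order m+1 sum rules with respect to some finitely supported υ : ℤ → ℂ^{1×r} satisfying υ̂(ξ) = (1+O(|ξ|), iξ+O(|ξ|^2), …, (iξ)^{r-1}+O(|ξ|^r)) as ξ → 0. Then necessarily υ̂(ξ) = (1, iξ, (iξ)^2, …, (iξ)^{r-1}) + O(|ξ|^{m+1}) as ξ → 0. -/

import Mathlib

open Complex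

/-- Symbol (Fourier series) of a scalar sequence. -/
noncomputable def symb (u : ℤ → ℂ) (ξ : ℂ) : ℂ :=
  ∑ᶠ k : ℤ, u k * Complex.exp (-Complex.I * k * ξ)

/-- Entrywise symbol of a matrix-valued sequence. -/
noncomputable def symbM {r : ℕ} (a : ℤ → Fin r → Fin r → ℂ) (i ℓ : Fin r) (ξ : ℂ) : ℂ :=
  ∑ᶠ k : ℤ, a k i ℓ * Complex.exp (-Complex.I * k * ξ)

lemma symb_eq_sum (u : ℤ → ℂ) (hu : (Function.support u).Finite) (ξ : ℂ) :
    symb u ξ = ∑ k ∈ hu.toFinset, u k * Complex.exp (-Complex.I * k * ξ) := by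
  apply finsum_eq_finset_sum_of_support_subset
  intro k hk
  simp only [Function.mem_support] at hk
  simp only [Set.Finite.coe_toFinset, Function.mem_support]
  intro h
  apply hk
  rw [h, zero_mul]

lemma contDiff_symb (u : ℤ → ℂ) (hu : (Function.support u).Finite) :
    ContDiff ℂ ⊤ (symb u) := by
  have : symb u = fun ξ => ∑ k ∈ hu.toFinset, u k * Complex.exp (-Complex.I * k * ξ) :=
    funext (symb_eq_sum u hu)
  rw [this]
  apply ContDiff.sum
  intro k _
  exact contDiff_const.mul (Complex.contDiff_exp.comp (contDiff_const.mul contDiff_id))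

lemma itd_sub (n : ℕ) (f g : ℂ → ℂ) (hf : ContDiff ℂ ⊤ f) (hg : ContDiff ℂ ⊤ g) (x : ℂ) :
    iteratedDeriv n (fun ξ => f ξ - g ξ) x = iteratedDeriv n f x - iteratedDeriv n g x := by
  have := iteratedDerivWithin_sub (Set.mem_univ x) uniqueDiffOn_univ
    (hf.of_le le_top).contDiffWithinAt (hg.of_le le_top).contDiffWithinAt (n := n)
  simpa [iteratedDerivWithin_univ, Pi.sub_def] using this

lemma itd_add (n : ℕ) (f g : ℂ → ℂ) (hf : ContDiff ℂ ⊤ f) (hg : ContDiff ℂ ⊤ g) (x : ℂ) :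
    iteratedDeriv n (fun ξ => f ξ + g ξ) x = iteratedDeriv n f x + iteratedDeriv n g x := by
  have := iteratedDerivWithin_add (Set.mem_univ x) uniqueDiffOn_univ
    (hf.of_le le_top).contDiffWithinAt (hg.of_le le_top).contDiffWithinAt (n := n)
  simpa [iteratedDerivWithin_univ, Pi.add_def] using this

lemma itd_const_mul (n : ℕ) (c : ℂ) (f : ℂ → ℂ) (hf : ContDiff ℂ ⊤ f) (x : ℂ) :
    iteratedDeriv n (fun ξ => c * f ξ) x = c * iteratedDeriv n f x := by
  have := iteratedDerivWithin_const_mul (Set.mem_univ x) uniqueDiffOn_univ c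
    (hf.of_le le_top).contDiffWithinAt (n := n)
  simpa [iteratedDerivWithin_univ] using this

/-- Coset identity: for a sequence vanishing at even nonzero indices,
`b̂(ξ) + b̂(ξ+π) = 2 b(0)`. -/
lemma symb_add_pi (b : ℤ → ℂ) (hb : (Function.support b).Finite)
    (h0 : ∀ k : ℤ, k ≠ 0 → b (2 * k) = 0) (ξ : ℂ) :
    symb b ξ + symb b (ξ + (Real.pi : ℂ)) = 2 * b 0 := by
  have hs1 : (Function.support fun k : ℤ =>
      b k * Complex.exp (-Complex.I * k * ξ)).Finite := by
    apply hb.subset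
    intro k hk
    simp only [Function.mem_support] at hk ⊢
    intro h; apply hk; rw [h, zero_mul]
  have hs2 : (Function.support fun k : ℤ =>
      b k * Complex.exp (-Complex.I * k * (ξ + (Real.pi : ℂ)))).Finite := by
    apply hb.subset
    intro k hk
    simp only [Function.mem_support] at hk ⊢
    intro h; apply hk; rw [h, zero_mul]
  unfold symb
  rw [← finsum_add_distrib hs1 hs2]
  rw [finsum_eq_single _ (0 : ℤ)]
  · simp only [Int.cast_zero, mul_zero, zero_mul, Complex.exp_zero, mul_one]
    ring
  · intro k hk
    rcases Int.even_or_odd k with ⟨t, rfl⟩ | ⟨t, rfl⟩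
    · have ht : t ≠ 0 := by
        rintro rfl; exact hk (by ring)
      have hb0 : b (t + t) = 0 := by rw [← two_mul]; exact h0 t ht
      rw [hb0]; ring
    · have hexp : Complex.exp (-Complex.I * ((2 * t + 1 : ℤ) : ℂ) * (ξ + (Real.pi : ℂ))) =
          -Complex.exp (-Complex.I * ((2 * t + 1 : ℤ) : ℂ) * ξ) := by
        have h1 : -Complex.I * ((2 * t + 1 : ℤ) : ℂ) * (ξ + (Real.pi : ℂ)) =
            (-Complex.I * ((2 * t + 1 : ℤ) : ℂ) * ξ) +
              (((-t : ℤ) : ℂ) * (2 * (Real.pi : ℂ) * Complex.I) +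
                -((Real.pi : ℂ) * Complex.I)) := by
          push_cast; ring
        rw [h1, Complex.exp_add, Complex.exp_add, Complex.exp_int_mul_two_pi_mul_I,
          Complex.exp_neg, Complex.exp_pi_mul_I]
        norm_num
      push_cast at hexp ⊢
      rw [hexp]
      ring

lemma two_pow_ne (j l : ℕ) (h : j ≠ l) : (2 : ℂ) ^ j ≠ (2 : ℂ) ^ l := by
  intro hEq
  apply h
  have h2 : (2 : ℕ) ^ j = 2 ^ l := by exact_mod_cast hEq
  exact Nat.pow_right_injective (le_refl 2) h2

/-- for an interpolatory Hermite mask with order `m+1` sum rules whose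
matching filter satisfies `υ̂(ξ) = (1+O(|ξ|), iξ+O(|ξ|²), …, (iξ)^{r-1}+O(|ξ|^r))`,
necessarily `υ̂(ξ) = (1, iξ, …, (iξ)^{r-1}) + O(|ξ|^{m+1})`. -/
theorem stmt18 (r : ℕ) (hr : 0 < r) (m : ℕ) (hm : r - 1 ≤ m)
    (a : ℤ → Fin r → Fin r → ℂ) (ha : (Function.support a).Finite)
    (hint0 : ∀ i j : Fin r, a 0 i j = if i = j then ((2 : ℂ) ^ ((i : ℕ) + 1))⁻¹ else 0)
    (hint : ∀ k : ℤ, k ≠ 0 → ∀ i j : Fin r, a (2 * k) i j = 0)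
    (υ : ℤ → Fin r → ℂ) (hυ : (Function.support υ).Finite)
    (hsr1 : ∀ j ≤ m, ∀ ℓ : Fin r,
      iteratedDeriv j
        (fun ξ : ℂ => (∑ i : Fin r, symb (fun k => υ k i) (2 * ξ) * symbM a i ℓ ξ) -
          symb (fun k => υ k ℓ) ξ) 0 = 0)
    (hsr2 : ∀ j ≤ m, ∀ ℓ : Fin r,
      iteratedDeriv j
        (fun ξ : ℂ => ∑ i : Fin r, symb (fun k => υ k i) (2 * ξ) *
          symbM a i ℓ (ξ + (Real.pi : ℂ))) 0 = 0)
    (hυform : ∀ ℓ : Fin r, ∀ j ≤ (ℓ : ℕ),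
      iteratedDeriv j
        (fun ξ : ℂ => symb (fun k => υ k ℓ) ξ - (Complex.I * ξ) ^ ((ℓ : ℕ))) 0 = 0) :
    ∀ ℓ : Fin r, ∀ j ≤ m,
      iteratedDeriv j
        (fun ξ : ℂ => symb (fun k => υ k ℓ) ξ - (Complex.I * ξ) ^ ((ℓ : ℕ))) 0 = 0 := by
  intro ℓ j hj
  by_cases hjl : j = (ℓ : ℕ)
  · exact hυform ℓ j (le_of_eq hjl)
  -- notation
  have hsupp : ∀ i : Fin r, (Function.support fun k => υ k i).Finite := by
    intro i
    apply hυ.subset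
    intro k hk
    simp only [Function.mem_support] at hk ⊢
    intro h; apply hk; rw [h]; rfl
  have hsuppa : ∀ i : Fin r, (Function.support fun k => a k i ℓ).Finite := by
    intro i
    apply ha.subset
    intro k hk
    simp only [Function.mem_support] at hk ⊢
    intro h; apply hk; rw [h]; rfl
  have hsymbM_eq : ∀ i : Fin r, symbM a i ℓ = symb (fun k => a k i ℓ) := fun i => rfl
  have hsymb : ∀ i : Fin r, ContDiff ℂ ⊤ (symb fun k => υ k i) :=
    fun i => contDiff_symb _ (hsupp i)
  have hsymbM : ∀ i : Fin r, ContDiff ℂ ⊤ (symbM a i ℓ) := by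
    intro i; rw [hsymbM_eq i]; exact contDiff_symb _ (hsuppa i)
  set u : ℂ → ℂ := symb (fun k => υ k ℓ) with hu_def
  set P : ℂ → ℂ := fun ξ => (Complex.I * ξ) ^ ((ℓ : ℕ)) with hP_def
  set g : ℂ → ℂ := fun ξ => u ξ - P ξ with hg_def
  have hP : ContDiff ℂ ⊤ P := (contDiff_const.mul contDiff_id).pow _
  have hgc : ContDiff ℂ ⊤ g := (hsymb ℓ).sub hP
  set c : ℂ := ((2 : ℂ) ^ ((ℓ : ℕ) + 1))⁻¹ with hc_def
  -- coset identity for each i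
  have hcoset : ∀ i : Fin r, ∀ ξ : ℂ,
      symbM a i ℓ ξ + symbM a i ℓ (ξ + (Real.pi : ℂ)) = 2 * a 0 i ℓ := by
    intro i ξ
    rw [hsymbM_eq i]
    exact symb_add_pi _ (hsuppa i) (fun k hk => hint k hk i ℓ) ξ
  -- key pointwise identity
  have key : ∀ ξ : ℂ,
      ((∑ i : Fin r, symb (fun k => υ k i) (2 * ξ) * symbM a i ℓ ξ) - u ξ) +
        (∑ i : Fin r, symb (fun k => υ k i) (2 * ξ) * symbM a i ℓ (ξ + (Real.pi : ℂ))) =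
      2 * c * g (2 * ξ) - g ξ := by
    intro ξ
    have h1 : ((∑ i : Fin r, symb (fun k => υ k i) (2 * ξ) * symbM a i ℓ ξ) - u ξ) +
        (∑ i : Fin r, symb (fun k => υ k i) (2 * ξ) * symbM a i ℓ (ξ + (Real.pi : ℂ))) =
        (∑ i : Fin r, symb (fun k => υ k i) (2 * ξ) *
          (symbM a i ℓ ξ + symbM a i ℓ (ξ + (Real.pi : ℂ)))) - u ξ := by
      rw [sub_add_eq_add_sub, ← Finset.sum_add_distrib]
      congr 1
      exact Finset.sum_congr rfl fun i _ => (mul_add _ _ _).symm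
    rw [h1]
    have h2 : (∑ i : Fin r, symb (fun k => υ k i) (2 * ξ) *
        (symbM a i ℓ ξ + symbM a i ℓ (ξ + (Real.pi : ℂ)))) =
        2 * c * u (2 * ξ) := by
      have : ∀ i : Fin r, symb (fun k => υ k i) (2 * ξ) *
          (symbM a i ℓ ξ + symbM a i ℓ (ξ + (Real.pi : ℂ))) =
          if i = ℓ then 2 * c * symb (fun k => υ k i) (2 * ξ) else 0 := by
        intro i
        rw [hcoset i ξ, hint0 i ℓ]
        by_cases h : i = ℓ <;> simp [h, hc_def] <;> ring
      rw [Finset.sum_congr rfl fun i _ => this i, Finset.sum_ite_eq' Finset.univ ℓ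
        (fun i => 2 * c * symb (fun k => υ k i) (2 * ξ))]
      simp [hu_def]
    rw [h2]
    have hPscale : 2 * c * P (2 * ξ) = P ξ := by
      simp only [hP_def]
      have : (Complex.I * (2 * ξ)) ^ ((ℓ : ℕ)) = 2 ^ ((ℓ : ℕ)) * (Complex.I * ξ) ^ ((ℓ : ℕ)) := by
        rw [show Complex.I * (2 * ξ) = 2 * (Complex.I * ξ) by ring, mul_pow]
      rw [this, hc_def]
      have h2ne : ((2 : ℂ) ^ ((ℓ : ℕ) + 1)) ≠ 0 := pow_ne_zero _ two_ne_zero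
      field_simp
      ring
    simp only [hg_def]
    rw [mul_sub, hPscale]
    ring
  -- smoothness of the two sum-rule functions
  have hF1 : ContDiff ℂ ⊤ (fun ξ : ℂ =>
      (∑ i : Fin r, symb (fun k => υ k i) (2 * ξ) * symbM a i ℓ ξ) -
        symb (fun k => υ k ℓ) ξ) := by
    apply ContDiff.sub
    · apply ContDiff.sum
      intro i _
      exact ((hsymb i).comp (contDiff_const.mul contDiff_id)).mul (hsymbM i)
    · exact hsymb ℓ
  have hF2 : ContDiff ℂ ⊤ (fun ξ : ℂ =>
      ∑ i : Fin r, symb (fun k => υ k i) (2 * ξ) *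
        symbM a i ℓ (ξ + (Real.pi : ℂ))) := by
    apply ContDiff.sum
    intro i _
    exact ((hsymb i).comp (contDiff_const.mul contDiff_id)).mul
      ((hsymbM i).comp (contDiff_id.add contDiff_const))
  -- derivative of the combined function vanishes
  have hH : iteratedDeriv j (fun ξ : ℂ => 2 * c * g (2 * ξ) - g ξ) 0 = 0 := by
    have heq : (fun ξ : ℂ => 2 * c * g (2 * ξ) - g ξ) =
        (fun ξ : ℂ =>
          (((∑ i : Fin r, symb (fun k => υ k i) (2 * ξ) * symbM a i ℓ ξ) -
            symb (fun k => υ k ℓ) ξ)) +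
          (∑ i : Fin r, symb (fun k => υ k i) (2 * ξ) *
            symbM a i ℓ (ξ + (Real.pi : ℂ)))) :=
      funext fun ξ => (key ξ).symm
    rw [heq, itd_add j _ _ hF1 hF2, hsr1 j hj ℓ, hsr2 j hj ℓ, add_zero]
  -- compute that derivative in terms of g
  have hg2 : ContDiff ℂ ⊤ (fun ξ : ℂ => g (2 * ξ)) :=
    hgc.comp (contDiff_const.mul contDiff_id)
  have hcomp : iteratedDeriv j (fun ξ : ℂ => g (2 * ξ)) 0 =
      2 ^ j * iteratedDeriv j g 0 := by
    have := iteratedDeriv_comp_const_mul (n := j) (hgc.of_le le_top) (2 : ℂ)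
    have h0 := congrFun this 0
    simpa using h0
  rw [itd_sub j _ _ (contDiff_const.mul hg2) hgc 0,
    itd_const_mul j _ _ hg2 0, hcomp] at hH
  -- conclude
  have hfac : 2 * c * (2 ^ j) - 1 ≠ 0 := by
    intro hzero
    have h2ne : ((2 : ℂ) ^ ((ℓ : ℕ) + 1)) ≠ 0 := pow_ne_zero _ two_ne_zero
    apply two_pow_ne (j + 1) ((ℓ : ℕ) + 1) (by omega)
    have : 2 * c * (2 ^ j) = 1 := by linear_combination hzero
    rw [hc_def] at this
    field_simp at this
    rw [pow_succ, pow_succ]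
    linear_combination this
  have : (2 * c * (2 ^ j) - 1) * iteratedDeriv j g 0 = 0 := by linear_combination hH
  have hDj : iteratedDeriv j g 0 = 0 := by
    rcases mul_eq_zero.mp this with h | h
    · exact absurd h hfac
    · exact h
  exact hDj
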